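/- For a binomial line process with n_B lines whose generating points (θ_i, r_i) are independently uniform on [0,π) × [−R_g, R_g], the expected total length of line segments per unit area (line length density) at distance r from the origin equals n_B/(2R_g) if r ≤ R_g, and equals (n_B/(π R_g))·arcsin(R_g/r) if r > R_g. -/

import Mathlib

open MeasureTheory Real Filter

/-- Expected total length of the lines of a binomial line process (with `nB` lines whose
generating points (θ,r) are independently uniform on [0,π) × [−Rg,Rg]) inside the disk of
radius `t` centered at the origin: a line with signed distance `r` from the origin meets
this disk in a chord of length 2√(t² − r²) when |r| < t. -/
noncomputable def blpDiskLength (nB Rg t : ℝ) : ℝ :=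
  nB * (1 / (2 * Rg)) *
    ∫ r in Set.Ioo (-Rg) Rg, (if |r| < t then 2 * Real.sqrt (t ^ 2 - r ^ 2) else 0)

lemma antideriv {t : ℝ} (ht : 0 < t) {x : ℝ} (hx : x ∈ Set.Ioo (-t) t) :
    HasDerivAt (fun x : ℝ => x * Real.sqrt (t ^ 2 - x ^ 2) + t ^ 2 * Real.arcsin (x / t))
      (2 * Real.sqrt (t ^ 2 - x ^ 2)) x := by
  obtain ⟨h1, h2⟩ := hx
  have hpos : 0 < t ^ 2 - x ^ 2 := by nlinarith
  have hs : Real.sqrt (t ^ 2 - x ^ 2) ≠ 0 := by positivity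
  have hsq : HasDerivAt (fun x : ℝ => Real.sqrt (t ^ 2 - x ^ 2))
      ((-(2 * x)) / (2 * Real.sqrt (t ^ 2 - x ^ 2))) x := by
    have : HasDerivAt (fun x : ℝ => t ^ 2 - x ^ 2) (-(2 * x)) x := by
      simpa using ((hasDerivAt_pow 2 x).const_sub (t ^ 2))
    exact this.sqrt (by positivity)
  have harc : HasDerivAt (fun x : ℝ => Real.arcsin (x / t))
      ((1 / Real.sqrt (1 - (x / t) ^ 2)) * (1 / t)) x := by
    have hd : HasDerivAt (fun x : ℝ => x / t) (1 / t) x := (hasDerivAt_id x).div_const t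
    exact (Real.hasDerivAt_arcsin (ne_of_gt (by rw [lt_div_iff₀ ht]; linarith))
      (ne_of_lt (by rw [div_lt_one ht]; exact h2))).comp x hd
  have := ((hasDerivAt_id x).mul hsq).add (harc.const_mul (t ^ 2))
  refine this.congr_deriv ?_
  have h1t : Real.sqrt (1 - (x / t) ^ 2) = Real.sqrt (t ^ 2 - x ^ 2) / t := by
    rw [show 1 - (x / t) ^ 2 = (t ^ 2 - x ^ 2) / t ^ 2 by field_simp,
      Real.sqrt_div hpos.le, Real.sqrt_sq ht.le]
  rw [h1t]
  field_simp
  simp only [id]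
  linear_combination (-1 : ℝ) * (Real.sq_sqrt hpos.le)

lemma int_closed {t a : ℝ} (ht : 0 < t) (ha : 0 < a) (hat : a ≤ t) :
    ∫ x in (-a)..a, 2 * Real.sqrt (t ^ 2 - x ^ 2)
      = 2 * (a * Real.sqrt (t ^ 2 - a ^ 2) + t ^ 2 * Real.arcsin (a / t)) := by
  have hcont : ContinuousOn
      (fun x : ℝ => x * Real.sqrt (t ^ 2 - x ^ 2) + t ^ 2 * Real.arcsin (x / t))
      (Set.Icc (-a) a) := by
    apply ContinuousOn.add
    · exact (continuousOn_id).mul ((continuous_const.sub (continuous_pow 2)).continuousOn.sqrt)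
    · exact continuousOn_const.mul (Real.continuous_arcsin.comp_continuousOn
        (continuousOn_id.div_const t))
  have hderiv : ∀ x ∈ Set.Ioo (-a) a,
      HasDerivAt (fun x : ℝ => x * Real.sqrt (t ^ 2 - x ^ 2) + t ^ 2 * Real.arcsin (x / t))
        (2 * Real.sqrt (t ^ 2 - x ^ 2)) x := fun x hx =>
    antideriv ht ⟨by linarith [hx.1], by linarith [hx.2]⟩
  have hint : IntervalIntegrable (fun x : ℝ => 2 * Real.sqrt (t ^ 2 - x ^ 2)) volume (-a) a :=
    (Continuous.intervalIntegrable (by continuity) _ _)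
  rw [intervalIntegral.integral_eq_sub_of_hasDerivAt_of_le (by linarith) hcont hderiv hint]
  have : Real.sqrt (t ^ 2 - (-a) ^ 2) = Real.sqrt (t ^ 2 - a ^ 2) := by ring_nf
  rw [neg_div, Real.arcsin_neg]
  ring_nf

lemma I_closed {Rg t : ℝ} (hRg : 0 < Rg) (ht : 0 < t) :
    ∫ r in Set.Ioo (-Rg) Rg, (if |r| < t then 2 * Real.sqrt (t ^ 2 - r ^ 2) else 0)
      = 2 * (min t Rg * Real.sqrt (t ^ 2 - min t Rg ^ 2)
          + t ^ 2 * Real.arcsin (min t Rg / t)) := by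
  have heq : ∀ r : ℝ, (if |r| < t then 2 * Real.sqrt (t ^ 2 - r ^ 2) else 0)
      = Set.indicator (Set.Ioo (-t) t) (fun r => 2 * Real.sqrt (t ^ 2 - r ^ 2)) r := by
    intro r
    rw [Set.indicator_apply]
    simp [Set.mem_Ioo, abs_lt]
  simp_rw [heq]
  rw [MeasureTheory.setIntegral_indicator measurableSet_Ioo]
  have : Set.Ioo (-Rg) Rg ∩ Set.Ioo (-t) t = Set.Ioo (-(min t Rg)) (min t Rg) := by
    rw [Set.Ioo_inter_Ioo, neg_inf]
    rw [sup_comm (-Rg) (-t), inf_comm Rg t]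
  rw [this, ← MeasureTheory.integral_Ioc_eq_integral_Ioo, ← intervalIntegral.integral_of_le
    (by have := lt_min ht hRg; linarith : -(min t Rg) ≤ min t Rg)]
  exact int_closed ht (lt_min ht hRg) (min_le_left t Rg)

lemma blp_le {nB Rg t : ℝ} (hRg : 0 < Rg) (ht : 0 < t) (htR : t ≤ Rg) :
    blpDiskLength nB Rg t = nB * (1 / (2 * Rg)) * (π * t ^ 2) := by
  rw [blpDiskLength, I_closed hRg ht, min_eq_left htR]
  rw [sub_self, Real.sqrt_zero, div_self ht.ne', Real.arcsin_one]
  ring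

lemma blp_ge {nB Rg t : ℝ} (hRg : 0 < Rg) (htR : Rg ≤ t) :
    blpDiskLength nB Rg t = nB * (1 / (2 * Rg)) *
      (2 * (Rg * Real.sqrt (t ^ 2 - Rg ^ 2) + t ^ 2 * Real.arcsin (Rg / t))) := by
  rw [blpDiskLength, I_closed hRg (lt_of_lt_of_le hRg htR), min_eq_right htR]

set_option maxHeartbeats 1000000 in
lemma key_bound {Rg ε : ℝ} (hRg : 0 < Rg) (hε : 0 < ε) (hε2 : ε < Rg / 12) :
    |2 * (Rg * Real.sqrt ((Rg + ε) ^ 2 - Rg ^ 2)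
        + (Rg + ε) ^ 2 * Real.arcsin (Rg / (Rg + ε)))
      - π * Rg ^ 2 - π * ((Rg + ε) ^ 2 - Rg ^ 2)|
    ≤ (2 * Real.sqrt (ε / (2 * Rg)) + 4 * Real.sqrt (3 * ε / Rg))
        * ((Rg + ε) ^ 2 - Rg ^ 2) := by
  set t := Rg + ε with htdef
  have ht : Rg < t := by rw [htdef]; linarith
  have ht0 : (0:ℝ) < t := by linarith
  have hs2 : 0 < t ^ 2 - Rg ^ 2 := by nlinarith
  set s := Real.sqrt (t ^ 2 - Rg ^ 2) with hsdef
  have hs : 0 < s := Real.sqrt_pos.mpr hs2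
  have hss : s ^ 2 = t ^ 2 - Rg ^ 2 := Real.sq_sqrt hs2.le
  have hsle : s ≤ Rg / 2 := by nlinarith [hss]
  have hu1 : s / t ≤ 1 / 2 := by
    rw [div_le_div_iff₀ ht0 (by norm_num)]
    nlinarith
  have hu0 : 0 < s / t := div_pos hs ht0
  set y := Real.arcsin (s / t) with hydef
  have hsin : Real.sin y = s / t := Real.sin_arcsin (by linarith) (by linarith)
  have hy0 : 0 < y := Real.arcsin_pos.mpr hu0
  have hy1 : y ≤ 1 := by
    have h34 : (3:ℝ) / 4 < Real.sin 1 := by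
      have := Real.sin_gt_sub_cube one_pos
      norm_num at this
      linarith
    calc y ≤ Real.arcsin (Real.sin 1) := Real.monotone_arcsin (by rw [hsin] at *; linarith)
    _ = 1 := Real.arcsin_sin (by linarith [Real.pi_gt_three]) (by linarith [Real.pi_gt_three])
  have harc : Real.arcsin (Rg / t) = π / 2 - y := by
    have h1t : Real.sqrt (1 - (Rg / t) ^ 2) = s / t := by
      rw [show 1 - (Rg / t) ^ 2 = (t ^ 2 - Rg ^ 2) / t ^ 2 by field_simp,
        Real.sqrt_div hs2.le, Real.sqrt_sq ht0.le, hsdef]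
    rw [Real.arcsin_eq_pi_div_two_sub_arccos, Real.arccos_eq_arcsin (by positivity), h1t, hydef]
  clear_value y
  clear_value s
  clear_value t
  have hylb : s / t ≤ y := by
    calc s / t = Real.sin y := hsin.symm
    _ ≤ y := (Real.sin_lt hy0).le
  have hcube := Real.sin_gt_sub_cube hy0
  rw [hsin] at hcube
  have hy3 : y ^ 3 ≤ y := by
    nlinarith [mul_nonneg (mul_nonneg hy0.le (sub_nonneg.mpr hy1)) (by linarith : (0:ℝ) ≤ 1 + y)]
  have hy2u : y ≤ 2 * (s / t) := by linarith
  have hy3' : y ^ 3 ≤ 8 * (s / t) ^ 3 := by nlinarith [pow_le_pow_left₀ hy0.le hy2u 3]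
  have hyub : y ≤ s / t + 2 * (s / t) ^ 3 := by linarith
  have hN : 2 * (Rg * s + t ^ 2 * Real.arcsin (Rg / t)) - π * Rg ^ 2 - π * (t ^ 2 - Rg ^ 2)
      = 2 * Rg * s - 2 * t ^ 2 * y := by
    rw [harc]; ring
  rw [hN]
  have hsval : s ^ 2 = 2 * Rg * ε + ε ^ 2 := by rw [hss, htdef]; ring
  have ht2 : t ^ 2 = Rg ^ 2 + 2 * Rg * ε + ε ^ 2 := by rw [htdef]; ring
  have hεR : 0 ≤ ε / (2 * Rg) := div_nonneg hε.le (by linarith)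
  have hεR3 : 0 ≤ 3 * ε / Rg := div_nonneg (by linarith) hRg.le
  have hb1 : ε / s ≤ Real.sqrt (ε / (2 * Rg)) := by
    rw [Real.le_sqrt (le_of_lt (div_pos hε hs)) hεR, div_pow,
      div_le_div_iff₀ (by positivity) (by linarith : (0:ℝ) < 2 * Rg)]
    rw [hsval]
    nlinarith [pow_pos hε 3]
  have hb2 : s / t ≤ Real.sqrt (3 * ε / Rg) := by
    rw [Real.le_sqrt hu0.le hεR3, div_pow, div_le_div_iff₀ (by positivity) hRg]
    rw [hsval, ht2]
    nlinarith [mul_pos (mul_pos hRg hRg) hε, mul_pos (mul_pos hRg hε) hε,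
      mul_pos (mul_pos hε hε) hε]
  have hts : 2 * t * s = 2 * Rg * s + 2 * ε * s := by rw [htdef]; ring
  have h2 : 2 * t ^ 2 * (s / t) = 2 * t * s := by field_simp
  have hupper : 2 * Rg * s - 2 * t ^ 2 * y ≤ -(2 * ε * s) := by
    have h1 : 2 * t ^ 2 * (s / t) ≤ 2 * t ^ 2 * y := by nlinarith
    linarith
  have hlower : -(2 * ε * s + 4 * s ^ 3 / t) ≤ 2 * Rg * s - 2 * t ^ 2 * y := by
    have h1 : 2 * t ^ 2 * y ≤ 2 * t ^ 2 * (s / t + 2 * (s / t) ^ 3) := by nlinarith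
    have h3 : 2 * t ^ 2 * (s / t + 2 * (s / t) ^ 3) = 2 * t * s + 4 * s ^ 3 / t := by
      field_simp; ring
    linarith
  have hst3 : (0:ℝ) ≤ s ^ 3 / t := by positivity
  have habs : |2 * Rg * s - 2 * t ^ 2 * y| ≤ 2 * ε * s + 4 * s ^ 3 / t := by
    rw [abs_le]
    refine ⟨by linarith, ?_⟩
    nlinarith [mul_pos hε hs]
  calc |2 * Rg * s - 2 * t ^ 2 * y| ≤ 2 * ε * s + 4 * s ^ 3 / t := habs
    _ = (2 * (ε / s) + 4 * (s / t)) * s ^ 2 := by field_simp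
    _ ≤ (2 * Real.sqrt (ε / (2 * Rg)) + 4 * Real.sqrt (3 * ε / Rg)) * s ^ 2 := by
        apply mul_le_mul_of_nonneg_right _ (sq_nonneg s)
        linarith
    _ = (2 * Real.sqrt (ε / (2 * Rg)) + 4 * Real.sqrt (3 * ε / Rg)) * (t ^ 2 - Rg ^ 2) := by
        rw [hss]

lemma norm_quot {c A R Δ b : ℝ} (hc : 0 ≤ c) (hΔ : 0 < Δ)
    (hkey : |A - R - π * Δ| ≤ b * Δ) :
    ‖(c * A - c * R) / (π * Δ) - c‖ ≤ c / π * b := by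
  have hπ := Real.pi_pos
  have hπΔ : 0 < π * Δ := by positivity
  have hcomb : (c * A - c * R) / (π * Δ) - c = c * (A - R - π * Δ) / (π * Δ) := by
    field_simp
  rw [hcomb, Real.norm_eq_abs, abs_div, abs_of_pos hπΔ, abs_mul, abs_of_nonneg hc,
    div_le_iff₀ hπΔ]
  calc c * |A - R - π * Δ| ≤ c * (b * Δ) := mul_le_mul_of_nonneg_left hkey hc
    _ = c / π * b * (π * Δ) := by field_simp

/-- The line length density of the binomial line process at distance r from the origin —
the limit of expected line length in a thin annulus of radii (r, r+ε) divided by the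
annulus area — equals nB/(2Rg) for r ≤ Rg and (nB/(πRg))·arcsin(Rg/r) for r > Rg. -/
theorem stmt_7 (nB : ℕ) (Rg r : ℝ) (hnB : 0 < nB) (hRg : 0 < Rg) (hr : 0 < r) :
    Tendsto
      (fun ε : ℝ =>
        (blpDiskLength nB Rg (r + ε) - blpDiskLength nB Rg r) / (π * ((r + ε) ^ 2 - r ^ 2)))
      (nhdsWithin 0 (Set.Ioi 0))
      (nhds (if r ≤ Rg then (nB : ℝ) / (2 * Rg)
             else (nB : ℝ) / (π * Rg) * Real.arcsin (Rg / r))) := by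
  rcases lt_trichotomy r Rg with hcase | hcase | hcase
  · -- r < Rg
    rw [if_pos hcase.le]
    apply Tendsto.congr' (f₁ := fun _ : ℝ => (nB : ℝ) / (2 * Rg))
    · filter_upwards [Ioo_mem_nhdsGT (show (0:ℝ) < Rg - r by linarith)] with ε hε
      obtain ⟨hε0, hε1⟩ := hε
      rw [blp_le hRg (by linarith) (by linarith), blp_le hRg hr hcase.le]
      have hne : π * ((r + ε) ^ 2 - r ^ 2) ≠ 0 := by
        have : 0 < (r + ε) ^ 2 - r ^ 2 := by nlinarith
        positivity
      field_simp
      exact (div_self (by nlinarith : (0:ℝ) < (r + ε) ^ 2 - r ^ 2).ne').symm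
    · exact tendsto_const_nhds
  · -- r = Rg
    subst hcase
    rw [if_pos le_rfl]
    have hπ := Real.pi_pos
    have hc0 : (0:ℝ) ≤ (nB : ℝ) * (1 / (2 * r)) := by positivity
    have hB : Tendsto (fun ε : ℝ => (nB : ℝ) * (1 / (2 * r)) / π *
        (2 * Real.sqrt (ε / (2 * r)) + 4 * Real.sqrt (3 * ε / r)))
        (nhdsWithin 0 (Set.Ioi 0)) (nhds 0) := by
      have hcont : Continuous fun ε : ℝ => (nB : ℝ) * (1 / (2 * r)) / π *
          (2 * Real.sqrt (ε / (2 * r)) + 4 * Real.sqrt (3 * ε / r)) := by fun_prop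
      have := (hcont.tendsto 0).mono_left
        (nhdsWithin_le_nhds (s := Set.Ioi (0:ℝ)))
      simpa using this
    have hsub : Tendsto (fun ε : ℝ =>
        (blpDiskLength nB r (r + ε) - blpDiskLength nB r r) / (π * ((r + ε) ^ 2 - r ^ 2))
          - (nB : ℝ) * (1 / (2 * r)))
        (nhdsWithin 0 (Set.Ioi 0)) (nhds 0) := by
      apply squeeze_zero_norm' _ hB
      filter_upwards [Ioo_mem_nhdsGT (show (0:ℝ) < r / 12 by positivity)] with ε hε
      obtain ⟨hε0, hε1⟩ := hε
      rw [blp_ge hRg (by linarith), blp_le hRg hr le_rfl]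
      exact norm_quot hc0 (by nlinarith) (key_bound hRg hε0 hε1)
    have hfin := hsub.add (tendsto_const_nhds (x := (nB : ℝ) * (1 / (2 * r))))
    simp only [sub_add_cancel, zero_add] at hfin
    have hval : (nB : ℝ) / (2 * r) = (nB : ℝ) * (1 / (2 * r)) := by ring
    rw [hval]
    exact hfin
  · -- r > Rg
    rw [if_neg (not_le.mpr hcase)]
    set c : ℝ := (nB : ℝ) * (1 / (2 * Rg)) with hc
    set G : ℝ → ℝ := fun t => 2 * (Rg * Real.sqrt (t ^ 2 - Rg ^ 2) + t ^ 2 * Real.arcsin (Rg / t))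
      with hGdef
    have hs : 0 < r ^ 2 - Rg ^ 2 := by nlinarith
    have hrr : (0:ℝ) < Rg / r := by positivity
    have hr1 : Rg / r < 1 := (div_lt_one hr).mpr hcase
    have hG : HasDerivAt G (4 * r * Real.arcsin (Rg / r)) r := by
      have hsq : HasDerivAt (fun t : ℝ => Real.sqrt (t ^ 2 - Rg ^ 2))
          ((2 * r ^ 1) / (2 * Real.sqrt (r ^ 2 - Rg ^ 2))) r :=
        ((hasDerivAt_pow 2 r).sub_const (Rg ^ 2)).sqrt (by positivity)
      have hinner : HasDerivAt (fun t : ℝ => Rg / t) (Rg * (-(r ^ 2)⁻¹)) r := by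
        simpa [div_eq_mul_inv] using (hasDerivAt_inv hr.ne').const_mul Rg
      have harc : HasDerivAt (fun t : ℝ => Real.arcsin (Rg / t))
          ((1 / Real.sqrt (1 - (Rg / r) ^ 2)) * (Rg * (-(r ^ 2)⁻¹))) r :=
        (Real.hasDerivAt_arcsin (by linarith) (ne_of_lt hr1)).comp r hinner
      have hprod := ((hasDerivAt_pow 2 r).mul harc)
      have := ((hsq.const_mul Rg).add hprod).const_mul 2
      refine this.congr_deriv ?_
      have h1t : Real.sqrt (1 - (Rg / r) ^ 2) = Real.sqrt (r ^ 2 - Rg ^ 2) / r := by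
        rw [show 1 - (Rg / r) ^ 2 = (r ^ 2 - Rg ^ 2) / r ^ 2 by field_simp,
          Real.sqrt_div hs.le, Real.sqrt_sq hr.le]
      rw [h1t]
      have hsne : Real.sqrt (r ^ 2 - Rg ^ 2) ≠ 0 := by positivity
      field_simp
      ring
    have hblp : ∀ t, Rg ≤ t → blpDiskLength nB Rg t = c * G t := fun t ht => blp_ge hRg ht
    have hmap : Tendsto (fun ε : ℝ => r + ε) (nhdsWithin 0 (Set.Ioi 0)) (nhdsWithin r {r}ᶜ) := by
      apply tendsto_nhdsWithin_of_tendsto_nhds_of_eventually_within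
      · have : Tendsto (fun ε : ℝ => r + ε) (nhds 0) (nhds (r + 0)) :=
          (continuous_const.add continuous_id).tendsto 0
        simpa using this.mono_left nhdsWithin_le_nhds
      · filter_upwards [self_mem_nhdsWithin] with ε (hε : 0 < ε)
        simp only [Set.mem_compl_iff, Set.mem_singleton_iff]
        intro h; linarith [h]
    have hslope := (hasDerivAt_iff_tendsto_slope.mp hG).comp hmap
    have hslope' : Tendsto (fun ε : ℝ => (G (r + ε) - G r) / ε) (nhdsWithin 0 (Set.Ioi 0))
        (nhds (4 * r * Real.arcsin (Rg / r))) := by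
      apply hslope.congr
      intro ε
      simp [slope_def_field, Function.comp, div_eq_mul_inv]
    have hfac : Tendsto (fun ε : ℝ => c / (π * (2 * r + ε))) (nhdsWithin 0 (Set.Ioi 0))
        (nhds (c / (π * (2 * r)))) := by
      have : ContinuousAt (fun ε : ℝ => c / (π * (2 * r + ε))) 0 := by
        apply ContinuousAt.div continuousAt_const
        · fun_prop
        · exact (by positivity : (0:ℝ) < π * (2 * r + 0)).ne'
      simpa using this.continuousWithinAt.tendsto
    have := hslope'.mul hfac
    apply Tendsto.congr' (f₁ := fun ε : ℝ => ((G (r + ε) - G r) / ε) * (c / (π * (2 * r + ε))))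
    · filter_upwards [self_mem_nhdsWithin] with ε (hε : 0 < ε)
      rw [hblp _ (by linarith), hblp _ hcase.le]
      have h1 : (r + ε) ^ 2 - r ^ 2 = ε * (2 * r + ε) := by ring
      rw [h1]
      have h2 : (2 * r + ε) ≠ 0 := by positivity
      field_simp
    · convert this using 2
      have hπ : π ≠ 0 := Real.pi_ne_zero
      field_simp [hRg.ne']
      rw [hc]
      field_simp
      ring
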